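/- Let T: V → g be an O-operator on a bimodule (V; L, R) over a pre-Lie algebra (g, ·), and let Ω: g → V satisfy Ω(x·y) = L_x Ω(y) + R_y Ω(x) and Ω(x)·^T Ω(y) = Ω(𝔏^T_{Ω(x)} y + ℜ^T_{Ω(y)} x) for all x,y ∈ g. Then with N = T∘Ω and S = Ω∘T, the triple (T, N, S) is an ON-structure: N is a Nijenhuis operator on g, (N,S) satisfy L_{N(x)}S(v) = S(L_{N(x)}v) + L_x S²(v) − S(L_x S(v)) and R_{N(x)}S(v) = S(R_{N(x)}v) + R_x S²(v) − S(R_x S(v)), N∘T = T∘S, and u·^{N∘T} v = S(u)·^T v + u·^T S(v) − S(u·^T v). -/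
import Mathlib


def PreLieFn {g : Type*} [AddCommGroup g] (m : g → g → g) : Prop :=
  ∀ x y z : g, m (m x y) z - m x (m y z) = m (m y x) z - m y (m x z)

def BimodFn {g V : Type*} [AddCommGroup g] [AddCommGroup V]
    (m : g → g → g) (L R : g → V → V) : Prop :=
  (∀ (x y : g) (u : V), L x (L y u) - L (m x y) u = L y (L x u) - L (m y x) u) ∧
  (∀ (x y : g) (u : V), L x (R y u) - R y (L x u) = R (m x y) u - R y (R x u))

def NijFn {g : Type*} [AddCommGroup g] (m : g → g → g) (N : g → g) : Prop :=
  ∀ x y : g, m (N x) (N y) = N (m (N x) y + m x (N y) - N (m x y))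

def IsOOp {K g V : Type*} [Field K] [AddCommGroup g] [Module K g]
    [AddCommGroup V] [Module K V]
    (m : g →ₗ[K] g →ₗ[K] g) (L R : g →ₗ[K] Module.End K V) (T : V →ₗ[K] g) : Prop :=
  ∀ u v : V, m (T u) (T v) = T (L (T u) v + R (T v) u)

/-- if Ω is a solution of the strong Maurer-Cartan equation on
g ⋈ V_T, then (T, N = T∘Ω, S = Ω∘T) is an ON-structure. -/
theorem strong_MC_gives_ON_structure {K g V : Type*} [Field K]
    [AddCommGroup g] [Module K g] [AddCommGroup V] [Module K V]
    (m : g →ₗ[K] g →ₗ[K] g) (hm : PreLieFn (fun x y => m x y))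
    (L R : g →ₗ[K] Module.End K V)
    (hb : BimodFn (fun x y => m x y) (fun x u => L x u) (fun x u => R x u))
    (T : V →ₗ[K] g) (hT : IsOOp m L R T)
    (Ω : g →ₗ[K] V)
    (hΩ1 : ∀ x y : g, Ω (m x y) = L x (Ω y) + R y (Ω x))
    (hΩ2 : ∀ x y : g,
      L (T (Ω x)) (Ω y) + R (T (Ω y)) (Ω x) =
      Ω ((m (T (Ω x)) y - T (R y (Ω x))) + (m x (T (Ω y)) - T (L x (Ω y))))) :
    NijFn (fun x y => m x y) (fun x : g => T (Ω x)) ∧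
    (∀ (x : g) (v : V),
      L (T (Ω x)) (Ω (T v)) =
        Ω (T (L (T (Ω x)) v)) + L x (Ω (T (Ω (T v)))) - Ω (T (L x (Ω (T v))))) ∧
    (∀ (x : g) (v : V),
      R (T (Ω x)) (Ω (T v)) =
        Ω (T (R (T (Ω x)) v)) + R x (Ω (T (Ω (T v)))) - Ω (T (R x (Ω (T v))))) ∧
    (∀ v : V, T (Ω (T v)) = T (Ω (T v))) ∧
    (∀ u v : V,
      L (T (Ω (T u))) v + R (T (Ω (T v))) u =
        (L (T (Ω (T u))) v + R (T v) (Ω (T u))) +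
        (L (T u) (Ω (T v)) + R (T (Ω (T v))) u) -
        Ω (T (L (T u) v + R (T v) u))) := by
  refine ⟨?_, ?_, ?_, fun v => rfl, ?_⟩
  · intro x y
    simp only
    rw [hT, hΩ2 x y]
    congr 2
    rw [hΩ1 x y, map_add]
    abel
  · intro x v
    have h2 := hΩ2 x (T v)
    rw [hT] at h2
    simp only [map_add, map_sub] at h2
    rw [hΩ1 x (T (Ω (T v)))] at h2
    rw [eq_sub_of_add_eq h2]
    abel
  · intro x v
    have h2 := hΩ2 (T v) x
    rw [hT] at h2
    simp only [map_add, map_sub] at h2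
    rw [hΩ1 (T (Ω (T v))) x] at h2
    rw [eq_sub_of_add_eq' h2]
    abel
  · intro u v
    rw [← hT, hΩ1]
    abel
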